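/- Let H be an infinite-dimensional real Hilbert space and X a real Banach space. A linear map T : H → X is bounded (there exists M with ‖Tx‖ ≤ M‖x‖ for all x) if and only if T is bounded along orthonormal sequences, i.e., sup_n ‖T x_n‖ < ∞ for every orthonormal sequence (x_n) in H. -/

import Mathlib

open scoped RealInnerProductSpace

lemma key_lemma
    {H : Type*} [NormedAddCommGroup H] [InnerProductSpace ℝ H] [CompleteSpace H]
    {X : Type*} [NormedAddCommGroup X] [NormedSpace ℝ X]
    (T : H →ₗ[ℝ] X) (hT : ¬ ∃ M : ℝ, ∀ x : H, ‖T x‖ ≤ M * ‖x‖)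
    (s : Finset H) (n : ℕ) :
    ∃ y : H, ‖y‖ = 1 ∧ (∀ v ∈ s, ⟪v, y⟫ = 0) ∧ (n : ℝ) ≤ ‖T y‖ := by
  set F : Submodule ℝ H := Submodule.span ℝ (s : Set H) with hF
  haveI : FiniteDimensional ℝ F := FiniteDimensional.span_of_finite ℝ s.finite_toSet
  -- T is unbounded on Fᗮ
  have hK : ∃ z ∈ Fᗮ, (n : ℝ) * ‖z‖ < ‖T z‖ := by
    by_contra hco
    push_neg at hco
    apply hT
    set g : F →L[ℝ] X := LinearMap.toContinuousLinearMap (T.domRestrict F) with hg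
    refine ⟨‖g‖ + n, fun x => ?_⟩
    set u : H := (F.orthogonalProjectionOnto x : H) with hu
    have huF : u ∈ F := (F.orthogonalProjectionOnto x).2
    have hvK : x - u ∈ Fᗮ := Submodule.sub_starProjection_mem_orthogonal x
    have hinner : ⟪u, x - u⟫ = 0 := hvK u huF
    have hsq : ‖x‖ ^ 2 = ‖u‖ ^ 2 + ‖x - u‖ ^ 2 := by
      have h2 := norm_add_sq_real u (x - u)
      rw [hinner] at h2
      simpa using h2
    have hun : ‖u‖ ≤ ‖x‖ := by nlinarith [norm_nonneg u, norm_nonneg (x - u), norm_nonneg x]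
    have hvn : ‖x - u‖ ≤ ‖x‖ := by nlinarith [norm_nonneg u, norm_nonneg (x - u), norm_nonneg x]
    have hTu : ‖T u‖ ≤ ‖g‖ * ‖x‖ := by
      have := g.le_opNorm (⟨u, huF⟩ : F)
      simp only [hg, LinearMap.coe_toContinuousLinearMap', LinearMap.domRestrict_apply] at this
      calc ‖T u‖ ≤ ‖g‖ * ‖(⟨u, huF⟩ : F)‖ := this
        _ ≤ ‖g‖ * ‖x‖ := by
            exact mul_le_mul_of_nonneg_left hun (norm_nonneg g)
    have hTv : ‖T (x - u)‖ ≤ (n : ℝ) * ‖x‖ := by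
      calc ‖T (x - u)‖ ≤ (n : ℝ) * ‖x - u‖ := hco _ hvK
        _ ≤ (n : ℝ) * ‖x‖ := by
            exact mul_le_mul_of_nonneg_left hvn (by positivity)
    calc ‖T x‖ = ‖T u + T (x - u)‖ := by rw [← map_add, show u + (x - u) = x from by simp]
      _ ≤ ‖T u‖ + ‖T (x - u)‖ := norm_add_le _ _
      _ ≤ ‖g‖ * ‖x‖ + (n : ℝ) * ‖x‖ := add_le_add hTu hTv
      _ = (‖g‖ + n) * ‖x‖ := by ring
  obtain ⟨z, hzK, hz⟩ := hK
  have hz0 : z ≠ 0 := by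
    rintro rfl
    simp at hz
  have hzn : ‖z‖ ≠ 0 := norm_ne_zero_iff.mpr hz0
  refine ⟨‖z‖⁻¹ • z, ?_, ?_, ?_⟩
  · rw [norm_smul, norm_inv, norm_norm, inv_mul_cancel₀ hzn]
  · intro v hv
    rw [real_inner_smul_right, hzK v (Submodule.subset_span hv), mul_zero]
  · rw [map_smul, norm_smul, norm_inv, norm_norm, inv_mul_eq_div,
      le_div_iff₀ (norm_pos_iff.mpr hz0)]
    exact hz.le

noncomputable def seqAux
    {H : Type*} [NormedAddCommGroup H] [InnerProductSpace ℝ H] [CompleteSpace H]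
    {X : Type*} [NormedAddCommGroup X] [NormedSpace ℝ X]
    (T : H →ₗ[ℝ] X) (hT : ¬ ∃ M : ℝ, ∀ x : H, ‖T x‖ ≤ M * ‖x‖) : ℕ → H × Finset H :=
  letI := Classical.decEq H
  fun n => Nat.rec
    (let y := (key_lemma T hT ∅ 0).choose; (y, ({y} : Finset H)))
    (fun n ih => let y := (key_lemma T hT ih.2 (n + 1)).choose; (y, insert y ih.2)) n

lemma seqAux_norm
    {H : Type*} [NormedAddCommGroup H] [InnerProductSpace ℝ H] [CompleteSpace H]
    {X : Type*} [NormedAddCommGroup X] [NormedSpace ℝ X]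
    (T : H →ₗ[ℝ] X) (hT : ¬ ∃ M : ℝ, ∀ x : H, ‖T x‖ ≤ M * ‖x‖) (n : ℕ) :
    ‖(seqAux T hT n).1‖ = 1 ∧ (n : ℝ) ≤ ‖T (seqAux T hT n).1‖ := by
  cases n with
  | zero =>
    have P := (key_lemma T hT ∅ 0).choose_spec
    exact ⟨P.1, by simpa using P.2.2⟩
  | succ k =>
    have P := (key_lemma T hT (seqAux T hT k).2 (k + 1)).choose_spec
    exact ⟨P.1, P.2.2⟩

lemma seqAux_orth
    {H : Type*} [NormedAddCommGroup H] [InnerProductSpace ℝ H] [CompleteSpace H]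
    {X : Type*} [NormedAddCommGroup X] [NormedSpace ℝ X]
    (T : H →ₗ[ℝ] X) (hT : ¬ ∃ M : ℝ, ∀ x : H, ‖T x‖ ≤ M * ‖x‖) (n : ℕ) :
    ∀ v ∈ (seqAux T hT n).2, ⟪v, (seqAux T hT (n + 1)).1⟫ = 0 :=
  (key_lemma T hT (seqAux T hT n).2 (n + 1)).choose_spec.2.1

lemma seqAux_mem
    {H : Type*} [NormedAddCommGroup H] [InnerProductSpace ℝ H] [CompleteSpace H]
    {X : Type*} [NormedAddCommGroup X] [NormedSpace ℝ X]
    (T : H →ₗ[ℝ] X) (hT : ¬ ∃ M : ℝ, ∀ x : H, ‖T x‖ ≤ M * ‖x‖) (n : ℕ) :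
    ∀ m, m ≤ n → (seqAux T hT m).1 ∈ (seqAux T hT n).2 := by
  classical
  induction n with
  | zero =>
    intro m hm
    rw [Nat.le_zero] at hm
    subst hm
    exact Finset.mem_singleton_self _
  | succ k ih =>
    intro m hm
    rcases Nat.lt_succ_iff_lt_or_eq.mp (Nat.lt_succ_of_le hm) with h | h
    · exact Finset.mem_insert_of_mem (ih m (Nat.lt_succ_iff.mp h))
    · subst h
      exact Finset.mem_insert_self _ _

/-- A linear map from an infinite-dimensional real Hilbert space to a
real Banach space is bounded iff it is bounded along orthonormal sequences. -/
theorem bounded_iff_bounded_along_orthonormal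
    {H : Type*} [NormedAddCommGroup H] [InnerProductSpace ℝ H] [CompleteSpace H]
    (hH : ¬ FiniteDimensional ℝ H)
    {X : Type*} [NormedAddCommGroup X] [NormedSpace ℝ X] [CompleteSpace X]
    (T : H →ₗ[ℝ] X) :
    (∃ M : ℝ, ∀ x : H, ‖T x‖ ≤ M * ‖x‖) ↔
      ∀ x : ℕ → H, Orthonormal ℝ x → ∃ M : ℝ, ∀ n : ℕ, ‖T (x n)‖ ≤ M := by
  constructor
  · rintro ⟨M, hM⟩ x hx
    exact ⟨M, fun n => by simpa [hx.1 n] using hM (x n)⟩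
  · intro h
    by_contra hT
    set x : ℕ → H := fun n => (seqAux T hT n).1 with hxdef
    have horth : Orthonormal ℝ x := by
      constructor
      · exact fun n => (seqAux_norm T hT n).1
      · intro i j hij
        have key : ∀ a b : ℕ, a < b → ⟪x a, x b⟫ = 0 := by
          intro a b hab
          obtain ⟨k, rfl⟩ := Nat.exists_eq_add_of_lt hab
          exact seqAux_orth T hT (a + k) _
            (seqAux_mem T hT (a + k) a (Nat.le_add_right a k))
        rcases lt_or_gt_of_ne hij with hlt | hlt
        · exact key i j hlt
        · rw [real_inner_comm]
          exact key j i hlt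
    obtain ⟨M, hM⟩ := h x horth
    obtain ⟨n, hn⟩ := exists_nat_gt M
    exact absurd (le_trans (seqAux_norm T hT n).2 (hM n)) (not_le.mpr hn)
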